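/- Let (x_i) be a normalized 1-unconditional sequence in a real Banach space X. Then for all finitely supported a, b : ℕ → ℝ, V((a_i·b_i)_{i≥1}) ≤ 2·V(a)·V(b). -/

import Mathlib

open scoped BigOperators


variable {X : Type*} [NormedAddCommGroup X] [NormedSpace ℝ X]

/-- A sequence is 1-unconditional if changing signs of coefficients does not change the
norm of finite linear combinations. -/
def OneUnconditional (x : ℕ → X) : Prop :=
  ∀ (s : Finset ℕ) (a ε : ℕ → ℝ), (∀ i, ε i = 1 ∨ ε i = -1) →
    ‖∑ i ∈ s, (ε i * a i) • x i‖ = ‖∑ i ∈ s, a i • x i‖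

/-- The quantities whose supremum defines the jamesification norm `J(a)`:
`‖∑_{n<r} (∑_{i ∈ [k n, m n]} a i) • x (k n)‖` over all systems
`k 0 ≤ m 0 < k 1 ≤ m 1 < ⋯`. -/
def jamesSet (x : ℕ → X) (a : ℕ → ℝ) : Set ℝ :=
  {v | ∃ (r : ℕ) (k m : ℕ → ℕ), (∀ n, k n ≤ m n) ∧ (∀ n, m n < k (n + 1)) ∧
    v = ‖∑ n ∈ Finset.range r, (∑ i ∈ Finset.Icc (k n) (m n), a i) • x (k n)‖}

/-- The jamesification norm of a finitely supported sequence of coefficients. -/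
noncomputable def jamesNorm (x : ℕ → X) (a : ℕ → ℝ) : ℝ :=
  sSup (jamesSet x a)

/-- The dual jamesification norm:
`J*(λ) = sup { |∑ i, λ i * a i| : a finitely supported, J(a) ≤ 1 }`. -/
noncomputable def jamesDualNorm (x : ℕ → X) (l : ℕ → ℝ) : ℝ :=
  sSup {v | ∃ a : ℕ → ℝ, (Function.support a).Finite ∧ jamesNorm x a ≤ 1 ∧
    v = |∑ᶠ i, l i * a i|}

/-- The quantities whose supremum defines the variation norm `V(a)`:
`‖∑_{n<r} (a (k n) - a (m n)) • x (k n)‖` over all systems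
`k 0 < m 0 ≤ k 1 < m 1 ≤ ⋯`. -/
def varSet (x : ℕ → X) (a : ℕ → ℝ) : Set ℝ :=
  {v | ∃ (r : ℕ) (k m : ℕ → ℕ), (∀ n, k n < m n) ∧ (∀ n, m n ≤ k (n + 1)) ∧
    v = ‖∑ n ∈ Finset.range r, (a (k n) - a (m n)) • x (k n)‖}

/-- The variation norm of a finitely supported sequence of coefficients. -/
noncomputable def varNorm (x : ℕ → X) (a : ℕ → ℝ) : ℝ :=
  sSup (varSet x a)

section MyAux

variable {X : Type*} [NormedAddCommGroup X] [NormedSpace ℝ X]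

lemma my_flip_one {x : ℕ → X} (hu : OneUnconditional x) (s : Finset ℕ) (a : ℕ → ℝ) (j : ℕ) :
    ‖∑ i ∈ s, (if i = j then -a i else a i) • x i‖ = ‖∑ i ∈ s, a i • x i‖ := by
  have h := hu s a (fun i => if i = j then -1 else 1)
    (fun i => by by_cases h : i = j <;> simp [h])
  rw [← h]
  congr 1
  refine Finset.sum_congr rfl fun i _ => ?_
  by_cases h : i = j <;> simp [h]

lemma my_seg (u w : X) (t : ℝ) (ht : |t| ≤ 1) :
    ‖t • u + w‖ ≤ max ‖u + w‖ ‖-u + w‖ := by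
  obtain ⟨ht1, ht2⟩ := abs_le.mp ht
  have hα : (0:ℝ) ≤ (1 + t) / 2 := by linarith
  have hβ : (0:ℝ) ≤ (1 - t) / 2 := by linarith
  have h1 : t • u + w = ((1 + t) / 2) • (u + w) + ((1 - t) / 2) • (-u + w) := by
    have e : ((1 + t) / 2) • (u + w) + ((1 - t) / 2) • (-u + w)
        = ((1 + t) / 2 - (1 - t) / 2) • u + ((1 + t) / 2 + (1 - t) / 2) • w := by
      rw [smul_add, smul_add, smul_neg, sub_smul, add_smul]; abel
    rw [e, show (1 + t) / 2 - (1 - t) / 2 = t by ring,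
      show (1 + t) / 2 + (1 - t) / 2 = 1 by ring, one_smul]
  calc ‖t • u + w‖
      = ‖((1 + t) / 2) • (u + w) + ((1 - t) / 2) • (-u + w)‖ := by rw [h1]
    _ ≤ ‖((1 + t) / 2) • (u + w)‖ + ‖((1 - t) / 2) • (-u + w)‖ := norm_add_le _ _
    _ = (1 + t) / 2 * ‖u + w‖ + (1 - t) / 2 * ‖-u + w‖ := by
        rw [norm_smul, norm_smul, Real.norm_eq_abs, Real.norm_eq_abs,
          abs_of_nonneg hα, abs_of_nonneg hβ]
    _ ≤ (1 + t) / 2 * max ‖u + w‖ ‖-u + w‖ + (1 - t) / 2 * max ‖u + w‖ ‖-u + w‖ :=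
        add_le_add (mul_le_mul_of_nonneg_left (le_max_left _ _) hα)
          (mul_le_mul_of_nonneg_left (le_max_right _ _) hβ)
    _ = max ‖u + w‖ ‖-u + w‖ := by ring

lemma my_dom_aux {x : ℕ → X} (hu : OneUnconditional x) (c : ℕ → ℝ) (s : Finset ℕ) :
    ∀ d : ℕ → ℝ, (∀ i ∈ s, |c i| ≤ 1) → ∀ t : Finset ℕ, Disjoint s t →
      ‖(∑ i ∈ s, (c i * d i) • x i) + ∑ i ∈ t, d i • x i‖ ≤ ‖∑ i ∈ s ∪ t, d i • x i‖ := by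
  induction s using Finset.induction_on with
  | empty => intro d _ t _; simp
  | @insert j s hj ih =>
    intro d hc t hdisj
    have hjt : j ∉ t := fun h => Finset.disjoint_left.mp hdisj (Finset.mem_insert_self j s) h
    have hst : Disjoint s t := hdisj.mono_left (Finset.subset_insert j s)
    have hcj : |c j| ≤ 1 := hc j (Finset.mem_insert_self j s)
    have hcs : ∀ i ∈ s, |c i| ≤ 1 := fun i hi => hc i (Finset.mem_insert_of_mem hi)
    have hdisj' : Disjoint s (insert j t) := by
      rw [Finset.disjoint_insert_right]; exact ⟨hj, hst⟩
    set u := d j • x j with hu_def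
    set W := (∑ i ∈ s, (c i * d i) • x i) + ∑ i ∈ t, d i • x i with hW
    have harr : (∑ i ∈ insert j s, (c i * d i) • x i) + ∑ i ∈ t, d i • x i
        = c j • u + W := by
      rw [Finset.sum_insert hj, hW, hu_def, mul_smul]; abel
    rw [harr]
    have hRU : insert j s ∪ t = s ∪ insert j t := by
      rw [Finset.insert_union, Finset.union_insert]
    refine le_trans (my_seg u W (c j) hcj) (max_le ?_ ?_)
    · have e1 : u + W = (∑ i ∈ s, (c i * d i) • x i) + ∑ i ∈ insert j t, d i • x i := by
        rw [Finset.sum_insert hjt, hW, hu_def]; abel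
      rw [e1, hRU]
      exact ih d hcs (insert j t) hdisj'
    · set d' := Function.update d j (-(d j)) with hd'
      have hd'j : d' j = -(d j) := Function.update_self j _ d
      have hd'ne : ∀ i, i ≠ j → d' i = d i := fun i hi => Function.update_of_ne hi _ d
      have e2 : -u + W = (∑ i ∈ s, (c i * d' i) • x i) + ∑ i ∈ insert j t, d' i • x i := by
        rw [Finset.sum_insert hjt, hd'j, hW, hu_def]
        have es : ∑ i ∈ s, (c i * d' i) • x i = ∑ i ∈ s, (c i * d i) • x i :=
          Finset.sum_congr rfl fun i hi => by rw [hd'ne i (fun h => hj (h ▸ hi))]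
        have et : ∑ i ∈ t, d' i • x i = ∑ i ∈ t, d i • x i :=
          Finset.sum_congr rfl fun i hi => by rw [hd'ne i (fun h => hjt (h ▸ hi))]
        rw [es, et, neg_smul]; abel
      rw [e2, hRU]
      refine le_trans (ih d' hcs (insert j t) hdisj') ?_
      have e3 : ∑ i ∈ s ∪ insert j t, d' i • x i
          = ∑ i ∈ s ∪ insert j t, (if i = j then -(d i) else d i) • x i := by
        refine Finset.sum_congr rfl fun i _ => ?_
        by_cases h : i = j
        · subst h; rw [hd'j]; simp
        · rw [hd'ne i h]; simp [h]
      rw [e3, my_flip_one hu _ d j]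

lemma my_dominated {x : ℕ → X} (hu : OneUnconditional x) (c d : ℕ → ℝ) (s : Finset ℕ)
    (hc : ∀ i ∈ s, |c i| ≤ 1) :
    ‖∑ i ∈ s, (c i * d i) • x i‖ ≤ ‖∑ i ∈ s, d i • x i‖ := by
  have h := my_dom_aux hu c s d hc ∅ (Finset.disjoint_empty_right s)
  simpa using h

lemma my_dom_comp {x : ℕ → X} (hu : OneUnconditional x) (k : ℕ → ℕ)
    (hk : Function.Injective k) (c d : ℕ → ℝ) (r : ℕ) (M : ℝ) (hM : 0 ≤ M)
    (hc : ∀ n ∈ Finset.range r, |c n| ≤ M) :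
    ‖∑ n ∈ Finset.range r, (c n * d n) • x (k n)‖
      ≤ M * ‖∑ n ∈ Finset.range r, d n • x (k n)‖ := by
  rcases eq_or_lt_of_le hM with hM0 | hMpos
  · have hz : ∀ n ∈ Finset.range r, (c n * d n) • x (k n) = 0 := by
      intro n hn
      have h1 := hc n hn
      rw [← hM0] at h1
      have : c n = 0 := abs_eq_zero.mp (le_antisymm h1 (abs_nonneg _))
      simp [this]
    rw [Finset.sum_congr rfl hz]
    simp [← hM0]
  · set g := Function.invFun k with hg
    have hgk : ∀ n, g (k n) = n := fun n => Function.leftInverse_invFun hk n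
    have hinj : ∀ y ∈ Finset.range r, ∀ z ∈ Finset.range r, k y = k z → y = z :=
      fun y _ z _ h => hk h
    have e1 : ∑ i ∈ (Finset.range r).image k, ((c (g i) / M) * (M * d (g i))) • x i
        = ∑ n ∈ Finset.range r, (c n * d n) • x (k n) := by
      rw [Finset.sum_image hinj]
      refine Finset.sum_congr rfl fun n _ => ?_
      rw [hgk]
      congr 1
      field_simp
    have e2 : ∑ i ∈ (Finset.range r).image k, (M * d (g i)) • x i
        = M • ∑ n ∈ Finset.range r, d n • x (k n) := by
      rw [Finset.sum_image hinj, Finset.smul_sum]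
      refine Finset.sum_congr rfl fun n _ => ?_
      rw [hgk, mul_smul]
    have hc' : ∀ i ∈ (Finset.range r).image k, |c (g i) / M| ≤ 1 := by
      intro i hi
      obtain ⟨n, hn, rfl⟩ := Finset.mem_image.mp hi
      rw [hgk, abs_div, abs_of_pos hMpos, div_le_one hMpos]
      exact hc n hn
    have h := my_dominated hu (fun i => c (g i) / M) (fun i => M * d (g i))
      ((Finset.range r).image k) hc'
    rw [e1, e2] at h
    calc ‖∑ n ∈ Finset.range r, (c n * d n) • x (k n)‖
        ≤ ‖M • ∑ n ∈ Finset.range r, d n • x (k n)‖ := h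
      _ = M * ‖∑ n ∈ Finset.range r, d n • x (k n)‖ := by
          rw [norm_smul, Real.norm_eq_abs, abs_of_pos hMpos]

lemma my_zero_mem_varSet (x : ℕ → X) (f : ℕ → ℝ) : (0:ℝ) ∈ varSet x f :=
  ⟨0, fun n => 2 * n, fun n => 2 * n + 1, fun n => by show 2*n < 2*n+1; omega,
    fun n => by show 2*n+1 ≤ 2*(n+1); omega, by simp⟩

lemma my_sum_abs_le {f : ℕ → ℝ} (hf : (Function.support f).Finite) (g : ℕ → ℕ)
    (hg : Function.Injective g) (r : ℕ) :
    ∑ n ∈ Finset.range r, |f (g n)| ≤ ∑ i ∈ hf.toFinset, |f i| := by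
  rw [← Finset.sum_image (f := fun i => |f i|) (fun y _ z _ h => hg h)]
  set t := (Finset.range r).image g with ht
  have e1 : ∑ i ∈ t, |f i| = ∑ i ∈ t ∩ hf.toFinset, |f i| := by
    refine (Finset.sum_subset (Finset.inter_subset_left) ?_).symm
    intro i hi hni
    have : f i = 0 := by
      by_contra hfi
      exact hni (Finset.mem_inter.mpr ⟨hi, hf.mem_toFinset.mpr hfi⟩)
    simp [this]
  rw [e1]
  exact Finset.sum_le_sum_of_subset_of_nonneg Finset.inter_subset_right
    (fun i _ _ => abs_nonneg _)

lemma my_bddAbove_varSet {x : ℕ → X} (hnorm : ∀ i, ‖x i‖ = 1) {f : ℕ → ℝ}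
    (hf : (Function.support f).Finite) : BddAbove (varSet x f) := by
  refine ⟨2 * ∑ i ∈ hf.toFinset, |f i|, ?_⟩
  rintro v ⟨r, k, m, h1, h2, rfl⟩
  have hkmono : StrictMono k :=
    strictMono_nat_of_lt_succ fun n => lt_of_lt_of_le (h1 n) (h2 n)
  have hmmono : StrictMono m :=
    strictMono_nat_of_lt_succ fun n => lt_of_le_of_lt (h2 n) (h1 (n + 1))
  calc ‖∑ n ∈ Finset.range r, (f (k n) - f (m n)) • x (k n)‖
      ≤ ∑ n ∈ Finset.range r, ‖(f (k n) - f (m n)) • x (k n)‖ := norm_sum_le _ _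
    _ = ∑ n ∈ Finset.range r, |f (k n) - f (m n)| := by
        refine Finset.sum_congr rfl fun n _ => ?_
        rw [norm_smul, Real.norm_eq_abs, hnorm, mul_one]
    _ ≤ ∑ n ∈ Finset.range r, (|f (k n)| + |f (m n)|) :=
        Finset.sum_le_sum fun n _ => abs_sub _ _
    _ = (∑ n ∈ Finset.range r, |f (k n)|) + ∑ n ∈ Finset.range r, |f (m n)| :=
        Finset.sum_add_distrib
    _ ≤ (∑ i ∈ hf.toFinset, |f i|) + ∑ i ∈ hf.toFinset, |f i| :=
        add_le_add (my_sum_abs_le hf k hkmono.injective r)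
          (my_sum_abs_le hf m hmmono.injective r)
    _ = 2 * ∑ i ∈ hf.toFinset, |f i| := by ring

lemma my_abs_le_varNorm {x : ℕ → X} (hnorm : ∀ i, ‖x i‖ = 1) {f : ℕ → ℝ}
    (hf : (Function.support f).Finite) (i : ℕ) : |f i| ≤ varNorm x f := by
  set m0 := hf.toFinset.sup id + i + 1 with hm0
  have him : i < m0 := by omega
  have hfm0 : f m0 = 0 := by
    by_contra hfi
    have hmem : m0 ∈ hf.toFinset := hf.mem_toFinset.mpr hfi
    have := Finset.le_sup (f := id) hmem
    simp only [id] at this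
    omega
  have hmem : |f i| ∈ varSet x f := by
    refine ⟨1, fun n => i + n * (m0 - i), fun n => m0 + n * (m0 - i), ?_, ?_, ?_⟩
    · intro n; show i + n * (m0 - i) < m0 + n * (m0 - i); omega
    · intro n
      show m0 + n * (m0 - i) ≤ i + (n + 1) * (m0 - i)
      have hh : (n + 1) * (m0 - i) = n * (m0 - i) + (m0 - i) := by ring
      omega
    · rw [Finset.sum_range_one]
      simp only [Nat.zero_mul, Nat.add_zero]
      rw [hfm0, sub_zero, norm_smul, Real.norm_eq_abs, hnorm, mul_one]
  exact le_csSup (my_bddAbove_varSet hnorm hf) hmem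

end MyAux

/-- **Theorem.** For a normalized 1-unconditional sequence, the variation norm is
submultiplicative with constant 2. -/
theorem varNorm_submultiplicative
    (X : Type) [NormedAddCommGroup X] [NormedSpace ℝ X]
    (x : ℕ → X) (hnorm : ∀ i, ‖x i‖ = 1) (hu : OneUnconditional x)
    (a bb : ℕ → ℝ) (ha : (Function.support a).Finite) (hb : (Function.support bb).Finite) :
    varNorm x (fun i => a i * bb i) ≤ 2 * varNorm x a * varNorm x bb := by
  have bddA := my_bddAbove_varSet hnorm ha
  have bddB := my_bddAbove_varSet hnorm hb
  have hVa0 : 0 ≤ varNorm x a := le_csSup bddA (my_zero_mem_varSet x a)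
  have hVb0 : 0 ≤ varNorm x bb := le_csSup bddB (my_zero_mem_varSet x bb)
  refine Real.sSup_le ?_ (by positivity)
  rintro v ⟨r, k, m, h1, h2, rfl⟩
  have hkmono : StrictMono k :=
    strictMono_nat_of_lt_succ fun n => lt_of_lt_of_le (h1 n) (h2 n)
  have split : ∀ n ∈ Finset.range r,
      ((fun i => a i * bb i) (k n) - (fun i => a i * bb i) (m n)) • x (k n)
      = (bb (k n) * (a (k n) - a (m n))) • x (k n)
        + (a (m n) * (bb (k n) - bb (m n))) • x (k n) := by
    intro n _
    rw [← add_smul]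
    congr 1
    simp only []
    ring
  have hA : ‖∑ n ∈ Finset.range r, (bb (k n) * (a (k n) - a (m n))) • x (k n)‖
      ≤ varNorm x bb * ‖∑ n ∈ Finset.range r, (a (k n) - a (m n)) • x (k n)‖ :=
    my_dom_comp hu k hkmono.injective (fun n => bb (k n)) (fun n => a (k n) - a (m n)) r
      (varNorm x bb) hVb0 (fun n _ => my_abs_le_varNorm hnorm hb (k n))
  have hB : ‖∑ n ∈ Finset.range r, (a (m n) * (bb (k n) - bb (m n))) • x (k n)‖
      ≤ varNorm x a * ‖∑ n ∈ Finset.range r, (bb (k n) - bb (m n)) • x (k n)‖ :=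
    my_dom_comp hu k hkmono.injective (fun n => a (m n)) (fun n => bb (k n) - bb (m n)) r
      (varNorm x a) hVa0 (fun n _ => my_abs_le_varNorm hnorm ha (m n))
  have memA : ‖∑ n ∈ Finset.range r, (a (k n) - a (m n)) • x (k n)‖ ≤ varNorm x a :=
    le_csSup bddA ⟨r, k, m, h1, h2, rfl⟩
  have memB : ‖∑ n ∈ Finset.range r, (bb (k n) - bb (m n)) • x (k n)‖ ≤ varNorm x bb :=
    le_csSup bddB ⟨r, k, m, h1, h2, rfl⟩
  calc ‖∑ n ∈ Finset.range r,
        ((fun i => a i * bb i) (k n) - (fun i => a i * bb i) (m n)) • x (k n)‖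
      = ‖(∑ n ∈ Finset.range r, (bb (k n) * (a (k n) - a (m n))) • x (k n))
          + ∑ n ∈ Finset.range r, (a (m n) * (bb (k n) - bb (m n))) • x (k n)‖ := by
        rw [← Finset.sum_add_distrib]
        exact congrArg _ (Finset.sum_congr rfl split)
    _ ≤ ‖∑ n ∈ Finset.range r, (bb (k n) * (a (k n) - a (m n))) • x (k n)‖
          + ‖∑ n ∈ Finset.range r, (a (m n) * (bb (k n) - bb (m n))) • x (k n)‖ :=
        norm_add_le _ _
    _ ≤ varNorm x bb * ‖∑ n ∈ Finset.range r, (a (k n) - a (m n)) • x (k n)‖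
          + varNorm x a * ‖∑ n ∈ Finset.range r, (bb (k n) - bb (m n)) • x (k n)‖ :=
        add_le_add hA hB
    _ ≤ varNorm x bb * varNorm x a + varNorm x a * varNorm x bb :=
        add_le_add (mul_le_mul_of_nonneg_left memA hVb0)
          (mul_le_mul_of_nonneg_left memB hVa0)
    _ = 2 * varNorm x a * varNorm x bb := by ring
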